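/- arXiv:2401.17208 — 2 statements merged into one kernel-verified Lean document; each statement's English description precedes it below -/
import Mathlib

section
/- For integers d ≥ 1, m ≥ 0, r ≥ 1 with m + 1 ≤ d, the counting function ℘(d,m,r) defined as the alternating sum ∑_{i=1}^{j} (-1)^{i+1} · C(m+n+1−i·d, m+r+i+1−i·d) · C(m+r+i−i·d, r+i) over the appropriate range is zero; that is, when m + 1 ≤ d there are no independent twisted r-forms of degree m invariant by a degree-d one-dimensional foliation. -/
/-- Integer binomial coefficient with the convention `C(a,b) = 0` if `b < 0` or `a < b`. -/
def intChoose (a b : ℤ) : ℤ :=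
  if 0 ≤ b ∧ b ≤ a then ((a.toNat).choose b.toNat : ℤ) else 0

/-- Base case of Theorem 1.1: if `m + 1 ≤ d` then the alternating sum
`∑_{i=1}^{j} (-1)^{i+1} C(m+n+1-id, m+r+i+1-id) C(m+r+i-id, r+i)` defining the counting
function `℘(d,m,r)` vanishes; there are no independent twisted `r`-forms of degree `m`
invariant by a degree-`d` one-dimensional foliation. -/
theorem wp_vanishes_of_le (n r j : ℕ) (d m : ℤ)
    (hr : 1 ≤ r) (hd : 1 ≤ d) (hm : 0 ≤ m) (hmd : m + 1 ≤ d) :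
    ∑ i ∈ Finset.Icc 1 j,
      (-1 : ℤ) ^ (i + 1) *
        intChoose (m + (n : ℤ) + 1 - (i : ℤ) * d) (m + (r : ℤ) + (i : ℤ) + 1 - (i : ℤ) * d) *
        intChoose (m + (r : ℤ) + (i : ℤ) - (i : ℤ) * d) ((r : ℤ) + (i : ℤ)) = 0 := by
  apply Finset.sum_eq_zero
  intro i hi
  have hi1 : (1 : ℤ) ≤ (i : ℤ) := by exact_mod_cast (Finset.mem_Icc.mp hi).1
  have hid : d ≤ (i : ℤ) * d := le_mul_of_one_le_left (by linarith) hi1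
  have h2 : intChoose (m + (r : ℤ) + (i : ℤ) - (i : ℤ) * d) ((r : ℤ) + (i : ℤ)) = 0 := by
    unfold intChoose
    rw [if_neg]
    rintro ⟨_, hle⟩
    linarith
  rw [h2, mul_zero]
end

section
/- Stability of pull-backs (Corollary 6.6, arithmetic core): suppose deg G = m(k+n−1) − (n−1) and every tangent vector field X (with reduced part X₀, deg X₀ ≤ deg X, deg X₀ ≥ 1) satisfies deg G ≤ ((k+n−1)/d)·(deg X₀ + 1) − (n−1). If n − 2 ≤ 2d − k − 1 (equivalently k + n − 1 ≤ 2d), then deg G ≤ 2·deg X when n = 3, and deg G < 2·deg X when n > 3. -/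
/-- Corollary 6.6 (arithmetic core): suppose `deg G = m(k+n-1) - (n-1)` and every tangent
vector field `X` (with reduced part `X₀`, `1 ≤ deg X₀ ≤ deg X`) satisfies
`deg G ≤ ((k+n-1)/d)·(deg X₀ + 1) - (n-1)`.  If `n - 2 ≤ 2d - k - 1` (equivalently
`k + n - 1 ≤ 2d`), then `deg G ≤ 2·deg X` when `n = 3` (semistability) and
`deg G < 2·deg X` when `n > 3` (stability). -/
theorem pullback_stability (n : ℕ) (hn : 3 ≤ n) (m k d degG : ℤ)
    (hm : 1 ≤ m) (hk : 0 ≤ k) (hd : 1 ≤ d)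
    (hG : degG = m * (k + (n : ℤ) - 1) - ((n : ℤ) - 1))
    (Tangent : ℤ → ℤ → Prop)
    (hbound : ∀ degX degX0, Tangent degX degX0 →
      1 ≤ degX0 ∧ degX0 ≤ degX ∧
        (degG : ℚ) ≤ ((k + (n : ℤ) - 1 : ℤ) : ℚ) / (d : ℚ) * ((degX0 : ℚ) + 1)
          - ((n : ℚ) - 1))
    (hkd : k + (n : ℤ) - 1 ≤ 2 * d) :
    ∀ degX degX0, Tangent degX degX0 →
      (n = 3 → (degG : ℚ) ≤ 2 * (degX : ℚ)) ∧ (3 < n → (degG : ℚ) < 2 * (degX : ℚ)) := by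
  intro degX degX0 ht
  obtain ⟨h1, h2, h3⟩ := hbound degX degX0 ht
  have hdQ : (1 : ℚ) ≤ (d : ℚ) := by exact_mod_cast hd
  have hdpos : (0 : ℚ) < (d : ℚ) := by linarith
  have hkdQ : ((k : ℚ) + (n : ℚ) - 1) ≤ 2 * (d : ℚ) := by exact_mod_cast hkd
  have hratio : ((k + (n : ℤ) - 1 : ℤ) : ℚ) / (d : ℚ) ≤ 2 := by
    rw [div_le_iff₀ hdpos]
    push_cast
    linarith
  have h1Q : (1 : ℚ) ≤ (degX0 : ℚ) := by exact_mod_cast h1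
  have h2Q : (degX0 : ℚ) ≤ (degX : ℚ) := by exact_mod_cast h2
  have hnQ : (3 : ℚ) ≤ (n : ℚ) := by exact_mod_cast hn
  have hpos : (0 : ℚ) ≤ (degX0 : ℚ) + 1 := by linarith
  have key : (degG : ℚ) ≤ 2 * ((degX0 : ℚ) + 1) - ((n : ℚ) - 1) := by
    have := mul_le_mul_of_nonneg_right hratio hpos
    linarith
  constructor
  · intro h3'
    have : (n : ℚ) = 3 := by exact_mod_cast h3'
    linarith
  · intro h3'
    have : (4 : ℚ) ≤ (n : ℚ) := by exact_mod_cast h3'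
    linarith
end
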